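/- arXiv:2403.05536 — 2 statements merged into one kernel-verified Lean document; each statement's English description precedes it below -/
import Mathlib

section
/- For disjoint subsets A, B of the torus T_n^d and α ∈ [0,d), ∑_{v∈A} ∑_{u∈B} ‖u−v‖^{−α} ≥ max{ |A|·(R_n(α) − R_{|B^c|}(α)), |B|·(R_n(α) − R_{|A^c|}(α)) }, where B^c and A^c denote complements in T_n^d and R_k(α) is the sum of ‖w‖^{−α} over the k vertices closest to the origin. -/
open Finset

/-- Key rearrangement lemma: the sum of an antitone function over any `k`-element
subset of `range M` is at least the sum over the top `k` indices `Ico (M-k) M`. -/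
lemma key_antitone_sum (f : ℕ → ℝ) :
    ∀ k M : ℕ, ∀ T : Finset ℕ, (∀ i j, i ≤ j → j < M → f j ≤ f i) →
      T ⊆ Finset.range M → T.card = k →
      ∑ i ∈ Finset.Ico (M - k) M, f i ≤ ∑ i ∈ T, f i := by
  intro k
  induction k with
  | zero => intro M T _ _ hcard; simp [Finset.card_eq_zero.mp hcard]
  | succ k ih =>
    intro M T hf hTM hcard
    have hTne : T.Nonempty := Finset.card_pos.mp (by omega)
    set t := T.max' hTne with ht_def
    have ht : t ∈ T := T.max'_mem hTne
    have htM : t < M := Finset.mem_range.mp (hTM ht)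
    have hT' : T.erase t ⊆ Finset.range (M - 1) := by
      intro s hs
      have hs1 := Finset.mem_erase.mp hs
      have hle : s ≤ t := T.le_max' s hs1.2
      exact Finset.mem_range.mpr (by omega)
    have hcard' : (T.erase t).card = k := by
      rw [Finset.card_erase_of_mem ht, hcard]
      omega
    have hih := ih (M - 1) (T.erase t)
      (fun i j hij hj => hf i j hij (lt_of_lt_of_le hj (Nat.sub_le M 1))) hT' hcard'
    have hsplit : ∑ i ∈ Finset.Ico (M - (k + 1)) M, f i
        = ∑ i ∈ Finset.Ico (M - (k + 1)) (M - 1), f i + f (M - 1) := by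
      have h := Finset.sum_Ico_succ_top (show M - (k + 1) ≤ M - 1 by omega) f
      rw [show M - 1 + 1 = M from by omega] at h
      exact h
    have hft : f (M - 1) ≤ f t := hf t (M - 1) (by omega) (by omega)
    have hTsum : ∑ i ∈ T.erase t, f i + f t = ∑ i ∈ T, f i :=
      Finset.sum_erase_add T f ht
    have hidx : M - 1 - k = M - (k + 1) := by omega
    rw [hidx] at hih
    linarith

/-- lower bound on the sum of inverse-power distances between two
disjoint subsets of the torus. -/
theorem stmt1 (N d : ℕ) [NeZero N]
    (nrm : (Fin d → ZMod N) → ℝ)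
    (hnrm0 : nrm 0 = 0)
    (hpos : ∀ v : Fin d → ZMod N, v ≠ 0 → 0 < nrm v)
    (M : ℕ) (hM : M = N ^ d - 1)
    (e : ℕ → (Fin d → ZMod N))
    (hinj : Set.InjOn e (Set.Iio M))
    (hne : ∀ i < M, e i ≠ 0)
    (hsurj : ∀ v : Fin d → ZMod N, v ≠ 0 → ∃ i < M, e i = v)
    (hmono : ∀ i j : ℕ, i ≤ j → j < M → nrm (e i) ≤ nrm (e j))
    (hpad : ∀ i : ℕ, M ≤ i → e i = 0)
    (α : ℝ) (hα0 : 0 ≤ α) (hαd : α < d)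
    (A B : Finset (Fin d → ZMod N)) (hAB : Disjoint A B) :
    max ((A.card : ℝ) *
          ((∑ v ∈ Finset.univ \ {0}, nrm v ^ (-α)) -
            ∑ i ∈ Finset.range (N ^ d - B.card), nrm (e i) ^ (-α)))
        ((B.card : ℝ) *
          ((∑ v ∈ Finset.univ \ {0}, nrm v ^ (-α)) -
            ∑ i ∈ Finset.range (N ^ d - A.card), nrm (e i) ^ (-α)))
      ≤ ∑ v ∈ A, ∑ u ∈ B, nrm (u - v) ^ (-α) := by
  have hNd : 1 ≤ N ^ d := Nat.one_le_pow d N (Nat.pos_of_ne_zero (NeZero.ne N))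
  set F : ℕ → ℝ := fun i => nrm (e i) ^ (-α) with hF_def
  have hF0 : ∀ i, 0 ≤ F i := by
    intro i
    apply Real.rpow_nonneg
    by_cases h : e i = 0
    · simp [h, hnrm0]
    · exact (hpos _ h).le
  have hFanti : ∀ i j, i ≤ j → j < M → F j ≤ F i := by
    intro i j hij hj
    have h1 : 0 < nrm (e i) := hpos _ (hne i (lt_of_le_of_lt hij hj))
    have h2 : nrm (e i) ≤ nrm (e j) := hmono i j hij hj
    exact Real.rpow_le_rpow_of_nonpos h1 h2 (neg_nonpos.mpr hα0)
  obtain ⟨idx, hidx⟩ : ∃ idx : (Fin d → ZMod N) → ℕ,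
      ∀ v : Fin d → ZMod N, v ≠ 0 → idx v < M ∧ e (idx v) = v := by
    refine ⟨fun v => if h : v ≠ 0 then (hsurj v h).choose else 0, fun v hv => ?_⟩
    simp only [dif_pos hv]
    exact ⟨(hsurj v hv).choose_spec.1, (hsurj v hv).choose_spec.2⟩
  have hS : (∑ v ∈ Finset.univ \ {0}, nrm v ^ (-α)) = ∑ i ∈ Finset.range M, F i := by
    refine Finset.sum_nbij' (fun v => idx v) (fun i => e i) ?_ ?_ ?_ ?_ ?_
    · intro v hv
      have hv0 : v ≠ 0 := by
        simpa using (Finset.mem_sdiff.mp hv).2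
      exact Finset.mem_range.mpr (hidx v hv0).1
    · intro i hi
      simp only [Finset.mem_sdiff, Finset.mem_univ, Finset.mem_singleton, true_and]
      exact hne i (Finset.mem_range.mp hi)
    · intro v hv
      have hv0 : v ≠ 0 := by
        simpa using (Finset.mem_sdiff.mp hv).2
      exact (hidx v hv0).2
    · intro i hi
      have hiM : i ∈ Set.Iio M := Finset.mem_range.mp hi
      have h0 : e i ≠ 0 := hne i (Finset.mem_range.mp hi)
      exact hinj (Set.mem_Iio.mpr (hidx (e i) h0).1) hiM (hidx (e i) h0).2
    · intro v hv
      have hv0 : v ≠ 0 := by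
        simpa using (Finset.mem_sdiff.mp hv).2
      show nrm v ^ (-α) = nrm (e (idx v)) ^ (-α)
      rw [(hidx v hv0).2]
  have core : ∀ (C : Finset (Fin d → ZMod N)) (g : (Fin d → ZMod N) → (Fin d → ZMod N)),
      Set.InjOn g C → (∀ c ∈ C, g c ≠ 0) →
      (∑ v ∈ Finset.univ \ {0}, nrm v ^ (-α)) - ∑ i ∈ Finset.range (N ^ d - C.card), F i
        ≤ ∑ c ∈ C, nrm (g c) ^ (-α) := by
    intro C g hg hg0
    by_cases hC : C = ∅
    · subst hC
      simp only [Finset.card_empty, Nat.sub_zero, Finset.sum_empty]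
      rw [sub_nonpos, hS]
      apply Finset.sum_le_sum_of_subset_of_nonneg
      · exact Finset.range_subset_range.mpr (by omega)
      · intro i _ _; exact hF0 i
    · have hk : 1 ≤ C.card := Finset.card_pos.mpr (Finset.nonempty_of_ne_empty hC)
      set φ : (Fin d → ZMod N) → ℕ := fun c => idx (g c) with hφ_def
      have hφe : ∀ c ∈ C, e (φ c) = g c := fun c hc => (hidx (g c) (hg0 c hc)).2
      have hφM : ∀ c ∈ C, φ c < M := fun c hc => (hidx (g c) (hg0 c hc)).1
      have hφinj : Set.InjOn φ C := by
        intro a ha b hb hab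
        apply hg ha hb
        rw [← hφe a ha, ← hφe b hb, hab]
      have hT_sub : C.image φ ⊆ Finset.range M := by
        intro i hi
        obtain ⟨c, hc, rfl⟩ := Finset.mem_image.mp hi
        exact Finset.mem_range.mpr (hφM c hc)
      have hT_card : (C.image φ).card = C.card := Finset.card_image_of_injOn hφinj
      have hsum_img : ∑ i ∈ C.image φ, F i = ∑ c ∈ C, nrm (g c) ^ (-α) := by
        rw [Finset.sum_image (fun a ha b hb hab => hφinj ha hb hab)]
        apply Finset.sum_congr rfl
        intro c hc
        show nrm (e (idx (g c))) ^ (-α) = nrm (g c) ^ (-α)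
        rw [hφe c hc]
      have hkey := key_antitone_sum F C.card M (C.image φ) hFanti hT_sub hT_card
      have h1 : (∑ v ∈ Finset.univ \ {0}, nrm v ^ (-α))
            - ∑ i ∈ Finset.range (N ^ d - C.card), F i
          = ∑ i ∈ Finset.Ico (N ^ d - C.card) M, F i := by
        rw [hS, Finset.sum_Ico_eq_sub F (by omega : N ^ d - C.card ≤ M)]
      have h2 : ∑ i ∈ Finset.Ico (N ^ d - C.card) M, F i
          ≤ ∑ i ∈ Finset.Ico (M - C.card) M, F i := by
        apply Finset.sum_le_sum_of_subset_of_nonneg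
        · exact Finset.Ico_subset_Ico (by omega) le_rfl
        · intro i _ _; exact hF0 i
      rw [h1, ← hsum_img]
      exact le_trans h2 hkey
  apply max_le
  · calc (A.card : ℝ) *
          ((∑ v ∈ Finset.univ \ {0}, nrm v ^ (-α)) -
            ∑ i ∈ Finset.range (N ^ d - B.card), nrm (e i) ^ (-α))
        = ∑ _v ∈ A, ((∑ v ∈ Finset.univ \ {0}, nrm v ^ (-α)) -
            ∑ i ∈ Finset.range (N ^ d - B.card), F i) := by
          rw [Finset.sum_const, nsmul_eq_mul]
      _ ≤ ∑ v ∈ A, ∑ u ∈ B, nrm (u - v) ^ (-α) := by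
          apply Finset.sum_le_sum
          intro v hv
          apply core B (fun u => u - v)
          · intro a _ b _ hab
            simpa using congrArg (· + v) hab
          · intro u hu
            have : u ≠ v := fun h => (Finset.disjoint_left.mp hAB hv) (h ▸ hu)
            exact sub_ne_zero.mpr this
  · rw [Finset.sum_comm]
    calc (B.card : ℝ) *
          ((∑ v ∈ Finset.univ \ {0}, nrm v ^ (-α)) -
            ∑ i ∈ Finset.range (N ^ d - A.card), nrm (e i) ^ (-α))
        = ∑ _u ∈ B, ((∑ v ∈ Finset.univ \ {0}, nrm v ^ (-α)) -
            ∑ i ∈ Finset.range (N ^ d - A.card), F i) := by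
          rw [Finset.sum_const, nsmul_eq_mul]
      _ ≤ ∑ u ∈ B, ∑ v ∈ A, nrm (u - v) ^ (-α) := by
          apply Finset.sum_le_sum
          intro u hu
          apply core A (fun v => u - v)
          · intro a _ b _ hab
            have := congrArg (fun x => u - x) hab
            simpa using this
          · intro v hv
            have : u ≠ v := fun h => (Finset.disjoint_left.mp hAB hv) (h ▸ hu)
            exact sub_ne_zero.mpr this
end

section
/- Let α : N → [0,d) satisfy sup_n α(n) < d. Then there exist constants 0 < c̲ < c̄ < ∞ such that for all j, n ∈ N, c̲ ≤ R_j(α(n)) / j^{1−α(n)/d} ≤ c̄, where R_j(α) is the sum of the inverse α-th powers of distances of the j closest nonzero lattice points to the origin. -/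
open Finset

/-- Bernoulli-based bound: `∑_{i<j} (i+1)^{-β} ≤ (1-β)⁻¹ j^{1-β}` for `0 ≤ β < 1`. -/
lemma sum_inv_rpow_le {β : ℝ} (h0 : 0 ≤ β) (h1 : β < 1) (j : ℕ) :
    ∑ i ∈ Finset.range j, ((i : ℝ) + 1) ^ (-β) ≤ (1 - β)⁻¹ * (j : ℝ) ^ (1 - β) := by
  have hε : (0:ℝ) < 1 - β := by linarith
  induction j with
  | zero => simp [Real.zero_rpow hε.ne']
  | succ j ih =>
    rw [Finset.sum_range_succ]
    set x : ℝ := (j : ℝ) with hxdef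
    have hx : (0:ℝ) ≤ x := Nat.cast_nonneg j
    have hx1 : (0:ℝ) < x + 1 := by linarith
    -- key inequality
    have hkey : x ^ (1 - β) + (1 - β) * (x + 1) ^ (-β) ≤ (x + 1) ^ (1 - β) := by
      have hs : (-1 : ℝ) ≤ -(x + 1)⁻¹ := by
        have : (x + 1)⁻¹ ≤ 1 := by
          rw [inv_le_one_iff₀]; right; linarith
        linarith
      have hber := rpow_one_add_le_one_add_mul_self hs (p := 1 - β) hε.le (by linarith)
      have h1 : 1 + -(x + 1)⁻¹ = x / (x + 1) := by field_simp; ring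
      rw [h1] at hber
      have hxeq : x ^ (1 - β) = (x + 1) ^ (1 - β) * (x / (x + 1)) ^ (1 - β) := by
        rw [← Real.mul_rpow hx1.le (by positivity)]
        congr 1
        field_simp
      have hmul := mul_le_mul_of_nonneg_left hber
        (Real.rpow_nonneg hx1.le (1 - β))
      rw [← hxeq] at hmul
      have hpow : (x + 1) ^ (1 - β) * (x + 1)⁻¹ = (x + 1) ^ (-β) := by
        rw [← Real.rpow_neg_one (x+1), ← Real.rpow_add hx1]
        ring_nf
      have hexp : (x+1) ^ (1-β) * (1 + (1 - β) * -(x + 1)⁻¹)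
          = (x+1) ^ (1-β) - (1 - β) * (x+1) ^ (-β) := by
        rw [← hpow]; ring
      rw [hexp] at hmul
      linarith
    have hcast : ((j + 1 : ℕ) : ℝ) = x + 1 := by push_cast; rfl
    rw [hcast]
    calc (∑ i ∈ Finset.range j, ((i : ℝ) + 1) ^ (-β)) + (x + 1) ^ (-β)
        ≤ (1 - β)⁻¹ * x ^ (1 - β) + (x + 1) ^ (-β) := by linarith
      _ = (1 - β)⁻¹ * (x ^ (1 - β) + (1 - β) * (x + 1) ^ (-β)) := by
          rw [mul_add, inv_mul_cancel_left₀ hε.ne']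
      _ ≤ (1 - β)⁻¹ * (x + 1) ^ (1 - β) := by
          exact mul_le_mul_of_nonneg_left hkey (by positivity)

lemma norm_cast_le_nat_iff {d : ℕ} (x : Fin d → ℤ) (m : ℕ) :
    ‖((fun k => (x k : ℝ)) : Fin d → ℝ)‖ ≤ (m : ℝ) ↔ ∀ k, |x k| ≤ (m : ℤ) := by
  rw [pi_norm_le_iff_of_nonneg (by positivity)]
  constructor
  · intro h k
    have := h k
    rw [Real.norm_eq_abs] at this
    exact_mod_cast this
  · intro h k
    rw [Real.norm_eq_abs]
    exact_mod_cast h k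

lemma norm_cast_ge_one {d : ℕ} {x : Fin d → ℤ} (hx : x ≠ 0) :
    (1 : ℝ) ≤ ‖((fun k => (x k : ℝ)) : Fin d → ℝ)‖ := by
  obtain ⟨k, hk⟩ := Function.ne_iff.1 hx
  have h1 : (1 : ℝ) ≤ ‖((x k : ℝ))‖ := by
    rw [Real.norm_eq_abs]
    exact_mod_cast Int.one_le_abs (by simpa using hk)
  exact h1.trans (norm_le_pi_norm (fun k => (x k : ℝ)) k)

/-- the box of nonzero lattice points with sup-norm at most `m` -/
noncomputable def latticeBox (d m : ℕ) : Finset (Fin d → ℤ) :=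
  (Fintype.piFinset fun _ : Fin d => Finset.Icc (-(m : ℤ)) m).erase 0

lemma mem_latticeBox {d m : ℕ} {x : Fin d → ℤ} :
    x ∈ latticeBox d m ↔ x ≠ 0 ∧ ∀ k, |x k| ≤ (m : ℤ) := by
  simp only [latticeBox, Finset.mem_erase, Fintype.mem_piFinset, Finset.mem_Icc]
  constructor
  · exact fun ⟨h0, h⟩ => ⟨h0, fun k => abs_le.2 (h k)⟩
  · exact fun ⟨h0, h⟩ => ⟨h0, fun k => abs_le.1 (h k)⟩

lemma card_latticeBox (d m : ℕ) : (latticeBox d m).card = (2 * m + 1) ^ d - 1 := by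
  have h0 : (0 : Fin d → ℤ) ∈ Fintype.piFinset fun _ : Fin d => Finset.Icc (-(m : ℤ)) m := by
    simp [Fintype.mem_piFinset]
  rw [latticeBox, Finset.card_erase_of_mem h0, Fintype.card_piFinset]
  have : (Finset.Icc (-(m : ℤ)) m).card = 2 * m + 1 := by
    rw [Int.card_Icc]
    omega
  simp [this]

lemma index_lt_of_norm_le {d : ℕ} {v : ℕ → (Fin d → ℤ)} (hinj : Function.Injective v)
    (hne : ∀ i, v i ≠ 0)
    (hmono : Monotone fun i => ‖((fun k => (v i k : ℝ)) : Fin d → ℝ)‖)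
    (i m : ℕ) (h : ‖((fun k => (v i k : ℝ)) : Fin d → ℝ)‖ ≤ (m : ℝ)) :
    i + 1 ≤ (2 * m + 1) ^ d - 1 := by
  have hcard : (Finset.range (i + 1)).card ≤ (latticeBox d m).card := by
    apply Finset.card_le_card_of_injOn v
    · intro i' hi'
      rw [Finset.mem_coe, mem_latticeBox]
      refine ⟨hne i', ?_⟩
      have hle : ‖((fun k => (v i' k : ℝ)) : Fin d → ℝ)‖ ≤ (m : ℝ) :=
        le_trans (hmono (Nat.lt_succ_iff.1 (Finset.mem_range.1 hi'))) h
      exact (norm_cast_le_nat_iff _ _).1 hle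
    · exact fun a _ b _ hab => hinj hab
  rwa [Finset.card_range, card_latticeBox] at hcard

lemma norm_le_of_index_lt {d : ℕ} {v : ℕ → (Fin d → ℤ)}
    (hsurj : ∀ x : Fin d → ℤ, x ≠ 0 → ∃ i, v i = x)
    (hmono : Monotone fun i => ‖((fun k => (v i k : ℝ)) : Fin d → ℝ)‖)
    (i m : ℕ) (h : i + 1 ≤ (2 * m + 1) ^ d - 1) :
    ‖((fun k => (v i k : ℝ)) : Fin d → ℝ)‖ ≤ (m : ℝ) := by
  by_contra hlt
  push_neg at hlt
  classical
  set f : (Fin d → ℤ) → ℕ := fun x => if hx : x ≠ 0 then (hsurj x hx).choose else 0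
    with hfdef
  have hvf : ∀ x, (hx : x ≠ 0) → v (f x) = x := by
    intro x hx
    simp only [hfdef, dif_pos hx]
    exact (hsurj x hx).choose_spec
  have hcard : (latticeBox d m).card ≤ (Finset.range i).card := by
    apply Finset.card_le_card_of_injOn f
    · intro x hx
      rw [Finset.mem_coe, mem_latticeBox] at hx
      rw [Finset.mem_coe, Finset.mem_range]
      by_contra hge
      push_neg at hge
      have h2 : ‖((fun k => (v i k : ℝ)) : Fin d → ℝ)‖
          ≤ ‖((fun k => (v (f x) k : ℝ)) : Fin d → ℝ)‖ := hmono hge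
      rw [hvf x hx.1] at h2
      have hxm : ‖((fun k => (x k : ℝ)) : Fin d → ℝ)‖ ≤ (m : ℝ) :=
        (norm_cast_le_nat_iff x m).2 hx.2
      linarith
    · intro a ha b hb hab
      rw [Finset.mem_coe, mem_latticeBox] at ha hb
      rw [← hvf a ha.1, ← hvf b hb.1, hab]
  rw [card_latticeBox, Finset.card_range] at hcard
  omega

lemma norm_upper_bound {d : ℕ} (hd : 0 < d) {v : ℕ → (Fin d → ℤ)}
    (hne : ∀ i, v i ≠ 0)
    (hsurj : ∀ x : Fin d → ℤ, x ≠ 0 → ∃ i, v i = x)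
    (hmono : Monotone fun i => ‖((fun k => (v i k : ℝ)) : Fin d → ℝ)‖)
    (i : ℕ) :
    ‖((fun k => (v i k : ℝ)) : Fin d → ℝ)‖ ≤ ((i : ℝ) + 1) ^ ((d : ℝ)⁻¹) := by
  set W : ℝ := ‖((fun k => (v i k : ℝ)) : Fin d → ℝ)‖ with hWdef
  have hW1 : (1 : ℝ) ≤ W := norm_cast_ge_one (hne i)
  set m : ℕ := ⌈W⌉₊ with hmdef
  have hm1 : 1 ≤ m := Nat.one_le_ceil_iff.2 (by linarith)
  have hWm : W ≤ (m : ℝ) := Nat.le_ceil W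
  -- can't have i+1 ≤ (2(m-1)+1)^d - 1
  have hnot : ¬ (i + 1 ≤ (2 * (m - 1) + 1) ^ d - 1) := by
    intro hle
    have := norm_le_of_index_lt hsurj hmono i (m - 1) hle
    have hceil : m ≤ m - 1 := by
      rw [hmdef]
      exact Nat.ceil_le.2 this
    omega
  have hpow1 : 1 ≤ (2 * (m - 1) + 1) ^ d := Nat.one_le_pow _ _ (by omega)
  have hge : (2 * (m - 1) + 1) ^ d ≤ i + 1 := by omega
  have hmd : m ^ d ≤ i + 1 :=
    le_trans (Nat.pow_le_pow_left (by omega) d) hge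
  -- real version
  have hWd : W ^ (d : ℕ) ≤ (i : ℝ) + 1 := by
    calc W ^ (d : ℕ) ≤ (m : ℝ) ^ (d : ℕ) := pow_le_pow_left₀ (by linarith) hWm d
      _ ≤ (i : ℝ) + 1 := by exact_mod_cast hmd
  have hWeq : W = (W ^ (d : ℕ)) ^ ((d : ℝ)⁻¹) := by
    rw [← Real.rpow_natCast W d, ← Real.rpow_mul (by linarith), mul_inv_cancel₀
      (by exact_mod_cast hd.ne'), Real.rpow_one]
  rw [hWeq]
  exact Real.rpow_le_rpow (by positivity) hWd (by positivity)

lemma norm_lower_bound {d : ℕ} (hd : 0 < d) {v : ℕ → (Fin d → ℤ)}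
    (hinj : Function.Injective v) (hne : ∀ i, v i ≠ 0)
    (hmono : Monotone fun i => ‖((fun k => (v i k : ℝ)) : Fin d → ℝ)‖)
    (i : ℕ) :
    ((i : ℝ) + 1) ^ ((d : ℝ)⁻¹) ≤ 5 * ‖((fun k => (v i k : ℝ)) : Fin d → ℝ)‖ := by
  set W : ℝ := ‖((fun k => (v i k : ℝ)) : Fin d → ℝ)‖ with hWdef
  have hW1 : (1 : ℝ) ≤ W := norm_cast_ge_one (hne i)
  set m : ℕ := ⌈W⌉₊ with hmdef
  have hWm : W ≤ (m : ℝ) := Nat.le_ceil W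
  have hidx : i + 1 ≤ (2 * m + 1) ^ d - 1 :=
    index_lt_of_norm_le hinj hne hmono i m hWm
  have hidx' : (i : ℝ) + 1 ≤ ((2 * m + 1 : ℕ) : ℝ) ^ (d : ℕ) := by
    have : i + 1 ≤ (2 * m + 1) ^ d := le_trans hidx (Nat.sub_le _ _)
    exact_mod_cast this
  have hmW : ((2 * m + 1 : ℕ) : ℝ) ≤ 5 * W := by
    have : (m : ℝ) < W + 1 := Nat.ceil_lt_add_one (by linarith)
    push_cast
    linarith
  have hfin : (i : ℝ) + 1 ≤ (5 * W) ^ (d : ℕ) :=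
    le_trans hidx' (pow_le_pow_left₀ (by positivity) hmW d)
  have h5eq : 5 * W = ((5 * W) ^ (d : ℕ)) ^ ((d : ℝ)⁻¹) := by
    rw [← Real.rpow_natCast (5 * W) d, ← Real.rpow_mul (by linarith), mul_inv_cancel₀
      (by exact_mod_cast hd.ne'), Real.rpow_one]
  rw [h5eq]
  exact Real.rpow_le_rpow (by positivity) hfin (by positivity)

/-- uniform two-sided polynomial bounds on `R_j(α(n))` for exponents
bounded away from `d`, where the nonzero lattice points of `ℤ^d` are enumerated in
increasing order of distance to the origin. -/
theorem stmt2 (d : ℕ) (hd : 0 < d)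
    (v : ℕ → (Fin d → ℤ))
    (hinj : Function.Injective v)
    (hne : ∀ i, v i ≠ 0)
    (hsurj : ∀ x : Fin d → ℤ, x ≠ 0 → ∃ i, v i = x)
    (hmono : Monotone fun i => ‖((fun k => (v i k : ℝ)) : Fin d → ℝ)‖)
    (α : ℕ → ℝ) (hα0 : ∀ n, 0 ≤ α n)
    (hαd : ∃ b : ℝ, b < d ∧ ∀ n, α n ≤ b) :
    ∃ clo chi : ℝ, 0 < clo ∧ clo < chi ∧
      ∀ j n : ℕ, 1 ≤ j →
        clo ≤ (∑ i ∈ Finset.range j, ‖((fun k => (v i k : ℝ)) : Fin d → ℝ)‖ ^ (-(α n)))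
                / (j : ℝ) ^ (1 - α n / d) ∧
        (∑ i ∈ Finset.range j, ‖((fun k => (v i k : ℝ)) : Fin d → ℝ)‖ ^ (-(α n)))
                / (j : ℝ) ^ (1 - α n / d) ≤ chi := by
  obtain ⟨b, hbd, hble⟩ := hαd
  have hb0 : (0 : ℝ) ≤ b := le_trans (hα0 0) (hble 0)
  have hdpos : (0 : ℝ) < d := by exact_mod_cast hd
  have h5b : (0 : ℝ) < (5 : ℝ) ^ b := Real.rpow_pos_of_pos (by norm_num) b
  set ε : ℝ := 1 - b / d with hεdef
  have hεpos : 0 < ε := by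
    have : b / d < 1 := (div_lt_one hdpos).2 hbd
    simp only [hεdef]; linarith
  refine ⟨1, (5 : ℝ) ^ b * ε⁻¹ + 1, one_pos, by nlinarith [inv_pos.2 hεpos], ?_⟩
  intro j n hj
  have jpos : (0 : ℝ) < (j : ℝ) := by exact_mod_cast hj
  have hβ0 : 0 ≤ α n / d := div_nonneg (hα0 n) hdpos.le
  have hβb : α n / d ≤ b / d := by
    exact div_le_div_of_nonneg_right (hble n) hdpos.le
  have hβ1 : α n / d < 1 := lt_of_le_of_lt hβb ((div_lt_one hdpos).2 hbd)
  have denom_pos : (0 : ℝ) < (j : ℝ) ^ (1 - α n / d) := Real.rpow_pos_of_pos jpos _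
  have hW1 : ∀ i : ℕ, (1 : ℝ) ≤ ‖((fun k => (v i k : ℝ)) : Fin d → ℝ)‖ :=
    fun i => norm_cast_ge_one (hne i)
  constructor
  · -- lower bound
    rw [le_div_iff₀ denom_pos, one_mul]
    have hterm : ∀ i ∈ Finset.range j,
        (j : ℝ) ^ (-(α n / d)) ≤ ‖((fun k => (v i k : ℝ)) : Fin d → ℝ)‖ ^ (-(α n)) := by
      intro i hi
      have hij : ((i : ℝ) + 1) ^ ((d : ℝ)⁻¹) ≤ (j : ℝ) ^ ((d : ℝ)⁻¹) := by
        apply Real.rpow_le_rpow (by positivity) _ (by positivity)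
        have : i + 1 ≤ j := Finset.mem_range.1 hi
        exact_mod_cast this
      have hWj : ‖((fun k => (v i k : ℝ)) : Fin d → ℝ)‖ ≤ (j : ℝ) ^ ((d : ℝ)⁻¹) :=
        (norm_upper_bound hd hne hsurj hmono i).trans hij
      have hpow : ‖((fun k => (v i k : ℝ)) : Fin d → ℝ)‖ ^ (α n)
          ≤ ((j : ℝ) ^ ((d : ℝ)⁻¹)) ^ (α n) :=
        Real.rpow_le_rpow (norm_nonneg _) hWj (hα0 n)
      have heq : ((j : ℝ) ^ ((d : ℝ)⁻¹)) ^ (α n) = (j : ℝ) ^ (α n / d) := by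
        rw [← Real.rpow_mul jpos.le]
        congr 1; ring
      rw [heq] at hpow
      rw [Real.rpow_neg jpos.le, Real.rpow_neg (norm_nonneg _)]
      exact inv_anti₀
        (Real.rpow_pos_of_pos (lt_of_lt_of_le one_pos (hW1 i)) _) hpow
    calc (j : ℝ) ^ (1 - α n / d) = (j : ℝ) * (j : ℝ) ^ (-(α n / d)) := by
          rw [show (1 : ℝ) - α n / d = 1 + -(α n / d) by ring, Real.rpow_add jpos,
            Real.rpow_one]
      _ = (Finset.range j).card • ((j : ℝ) ^ (-(α n / d))) := by
          rw [Finset.card_range, nsmul_eq_mul]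
      _ ≤ ∑ i ∈ Finset.range j, ‖((fun k => (v i k : ℝ)) : Fin d → ℝ)‖ ^ (-(α n)) :=
          Finset.card_nsmul_le_sum _ _ _ hterm
  · -- upper bound
    rw [div_le_iff₀ denom_pos]
    have hterm : ∀ i ∈ Finset.range j,
        ‖((fun k => (v i k : ℝ)) : Fin d → ℝ)‖ ^ (-(α n))
          ≤ (5 : ℝ) ^ b * ((i : ℝ) + 1) ^ (-(α n / d)) := by
      intro i _
      have hlo := norm_lower_bound hd hinj hne hmono i
      have hA : (0 : ℝ) < ((i : ℝ) + 1) ^ (α n / d) := Real.rpow_pos_of_pos (by positivity) _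
      have hWposi : (0 : ℝ) < ‖((fun k => (v i k : ℝ)) : Fin d → ℝ)‖ :=
        lt_of_lt_of_le one_pos (hW1 i)
      have hB : (0 : ℝ) < ‖((fun k => (v i k : ℝ)) : Fin d → ℝ)‖ ^ (α n) :=
        Real.rpow_pos_of_pos hWposi _
      have h5a : (0 : ℝ) < (5 : ℝ) ^ (α n) := Real.rpow_pos_of_pos (by norm_num) _
      have hAB : ((i : ℝ) + 1) ^ (α n / d)
          ≤ (5 : ℝ) ^ (α n) * ‖((fun k => (v i k : ℝ)) : Fin d → ℝ)‖ ^ (α n) := by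
        have := Real.rpow_le_rpow (by positivity) hlo (hα0 n)
        rwa [Real.mul_rpow (by norm_num) (norm_nonneg _), ← Real.rpow_mul (by positivity),
          show (d : ℝ)⁻¹ * α n = α n / d by ring] at this
      have hinv : (‖((fun k => (v i k : ℝ)) : Fin d → ℝ)‖ ^ (α n))⁻¹
          ≤ (5 : ℝ) ^ (α n) * (((i : ℝ) + 1) ^ (α n / d))⁻¹ := by
        have hd1 : ((i : ℝ) + 1) ^ (α n / d) / (5 : ℝ) ^ (α n)
            ≤ ‖((fun k => (v i k : ℝ)) : Fin d → ℝ)‖ ^ (α n) := by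
          rw [div_le_iff₀ h5a, mul_comm]
          exact hAB
        have h2 := one_div_le_one_div_of_le (div_pos hA h5a) hd1
        rw [one_div_div] at h2
        rw [inv_eq_one_div, inv_eq_one_div, mul_one_div]
        exact h2
      have h5ab : (5 : ℝ) ^ (α n) ≤ (5 : ℝ) ^ b :=
        Real.rpow_le_rpow_of_exponent_le (by norm_num) (hble n)
      rw [Real.rpow_neg (norm_nonneg _), Real.rpow_neg (by positivity : (0:ℝ) ≤ (i:ℝ)+1)]
      calc (‖((fun k => (v i k : ℝ)) : Fin d → ℝ)‖ ^ (α n))⁻¹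
          ≤ (5 : ℝ) ^ (α n) * (((i : ℝ) + 1) ^ (α n / d))⁻¹ := hinv
        _ ≤ (5 : ℝ) ^ b * (((i : ℝ) + 1) ^ (α n / d))⁻¹ :=
            mul_le_mul_of_nonneg_right h5ab (inv_nonneg.2 hA.le)
    calc ∑ i ∈ Finset.range j, ‖((fun k => (v i k : ℝ)) : Fin d → ℝ)‖ ^ (-(α n))
        ≤ ∑ i ∈ Finset.range j, (5 : ℝ) ^ b * ((i : ℝ) + 1) ^ (-(α n / d)) :=
          Finset.sum_le_sum hterm
      _ = (5 : ℝ) ^ b * ∑ i ∈ Finset.range j, ((i : ℝ) + 1) ^ (-(α n / d)) := by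
          rw [Finset.mul_sum]
      _ ≤ (5 : ℝ) ^ b * ((1 - α n / d)⁻¹ * (j : ℝ) ^ (1 - α n / d)) :=
          mul_le_mul_of_nonneg_left (sum_inv_rpow_le hβ0 hβ1 j) h5b.le
      _ ≤ (5 : ℝ) ^ b * (ε⁻¹ * (j : ℝ) ^ (1 - α n / d)) := by
          apply mul_le_mul_of_nonneg_left _ h5b.le
          apply mul_le_mul_of_nonneg_right _ denom_pos.le
          apply inv_anti₀ hεpos
          simp only [hεdef]; linarith
      _ = (5 : ℝ) ^ b * ε⁻¹ * (j : ℝ) ^ (1 - α n / d) := by ring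
      _ ≤ ((5 : ℝ) ^ b * ε⁻¹ + 1) * (j : ℝ) ^ (1 - α n / d) :=
          mul_le_mul_of_nonneg_right (by linarith) denom_pos.le
end
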